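/- If two entries of a multisymmetric function coincide, they merge with a binomial coefficient: e_{(α_1,α_2,...,α_k)}(f,f,f_3,...,f_k) = ((α_1+α_2)!/(α_1!α_2!)) · e_{(α_1+α_2,α_3,...,α_k)}(f,f_3,...,f_k). -/

import Mathlib

open MvPolynomial Finset
open scoped Classical

noncomputable section

variable {R : Type*} [CommRing R]

/-- f(j): substitution y_i ↦ x_i(j). -/
def subst (m n : ℕ) (f : MvPolynomial (Fin m) R) (j : Fin n) :
    MvPolynomial (Fin m × Fin n) R :=
  rename (fun i => (i, j)) f

/-- the action of σ ∈ Sₙ on A_R(n,m). -/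
def permRename (m n : ℕ) (σ : Equiv.Perm (Fin n)) :
    MvPolynomial (Fin m × Fin n) R →ₐ[R] MvPolynomial (Fin m × Fin n) R :=
  rename (fun q => (q.1, σ q.2))

/-- invariant submodule A_R(n,m)^{Sₙ}. -/
def invSub (R : Type*) [CommRing R] (m n : ℕ) :
    Submodule R (MvPolynomial (Fin m × Fin n) R) where
  carrier := {p | ∀ σ : Equiv.Perm (Fin n), permRename m n σ p = p}
  add_mem' := fun ha hb σ => by simp [map_add, ha σ, hb σ]
  zero_mem' := fun σ => by simp
  smul_mem' := fun c p hp σ => by simp [map_smul, hp σ]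

/-- invariant subalgebra A_R(n,m)^{Sₙ}. -/
def invAlg (R : Type*) [CommRing R] (m n : ℕ) :
    Subalgebra R (MvPolynomial (Fin m × Fin n) R) where
  carrier := {p | ∀ σ : Equiv.Perm (Fin n), permRename m n σ p = p}
  add_mem' := fun ha hb σ => by simp [map_add, ha σ, hb σ]
  mul_mem' := fun ha hb σ => by simp [map_mul, ha σ, hb σ]
  algebraMap_mem' := fun r σ => by simp [permRename]

/-- e_α(f): coefficient of t^α in ∏ᵢ (1 + ∑ₕ tₕ fₕ(i)). -/
def eAlpha (m n : ℕ) {ι : Type*} [Fintype ι] (f : ι → MvPolynomial (Fin m) R) (α : ι → ℕ) :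
    MvPolynomial (Fin m × Fin n) R :=
  coeff (Finsupp.equivFunOnFinite.symm α)
    (∏ i : Fin n, (1 + ∑ h : ι, X h * C (subst m n (f h) i)))

/-- k-th elementary symmetric polynomial evaluated at v(1),…,v(n). -/
def esymVal {S : Type*} [CommRing S] (n : ℕ) (v : Fin n → S) (k : ℕ) : S :=
  ∑ A ∈ Finset.powersetCard k (Finset.univ : Finset (Fin n)), ∏ j ∈ A, v j

/-- multidegree of a monomial exponent. -/
def wdeg (m n : ℕ) (d : Fin m × Fin n →₀ ℕ) : Fin m → ℕ := fun i => ∑ j : Fin n, d (i, j)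

/-- multidegree-a component of A_R(n,m). -/
def comp (R : Type*) [CommRing R] (m n : ℕ) (a : Fin m → ℕ) :
    Submodule R (MvPolynomial (Fin m × Fin n) R) where
  carrier := {p | ∀ d ∈ p.support, wdeg m n d = a}
  add_mem' := fun ha hb d hd => by
    rcases Finset.mem_union.1 (MvPolynomial.support_add hd) with h | h
    · exact ha d h
    · exact hb d h
  zero_mem' := fun d hd => by simp at hd
  smul_mem' := fun c p hp d hd => hp d (MvPolynomial.support_smul hd)

/-- the restriction map πₙ₊₁ : A_R(n+1,m) → A_R(n,m), x_i(n+1) ↦ 0. -/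
def projDown (R : Type*) [CommRing R] (m n : ℕ) :
    MvPolynomial (Fin m × Fin (n+1)) R →ₐ[R] MvPolynomial (Fin m × Fin n) R :=
  aeval (fun p : Fin m × Fin (n+1) =>
    if h : (p.2 : ℕ) < n then X (p.1, ⟨p.2, h⟩) else 0)

/-- e_α for finitely supported α : M_m⁺ → ℕ. -/
def eAlphaM (R : Type*) [CommRing R] (m n : ℕ) (α : {d : Fin m →₀ ℕ // d ≠ 0} →₀ ℕ) :
    MvPolynomial (Fin m × Fin n) R :=
  eAlpha m n (fun l => monomial ((α.support.equivFin.symm l) : {d : Fin m →₀ ℕ // d ≠ 0}).1 (1 : R))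
    (fun l => α (α.support.equivFin.symm l))

/-- a monomial of positive degree is primitive if it is not a proper power. -/
def Primitive (m : ℕ) (d : Fin m →₀ ℕ) : Prop :=
  d ≠ 0 ∧ ∀ (e : Fin m →₀ ℕ) (k : ℕ), 2 ≤ k → d ≠ k • e



section KeyAux
variable {S' : Type*} [CommRing S']

lemma key_lemma (k α₁ α₂ : ℕ) (β : Fin k → ℕ) (q : MvPolynomial (Fin (k+1)) S') :
    coeff (Finsupp.equivFunOnFinite.symm (Fin.cons α₁ (Fin.cons α₂ β)))
      (aeval (Fin.cons (X 0 + X 1) (fun i : Fin k => X i.succ.succ)) q) =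
    (α₁+α₂).choose α₁ * coeff (Finsupp.equivFunOnFinite.symm (Fin.cons (α₁+α₂) β)) q := by
  set D : Fin (k+2) →₀ ℕ := Finsupp.equivFunOnFinite.symm (Fin.cons α₁ (Fin.cons α₂ β)) with hD
  set E : Fin (k+1) →₀ ℕ := Finsupp.equivFunOnFinite.symm (Fin.cons (α₁+α₂) β) with hE
  induction q using MvPolynomial.induction_on' with
  | add p q hp hq => rw [map_add, coeff_add, coeff_add, hp, hq, mul_add]
  | monomial e c =>
    set φ : Fin (k+1) → MvPolynomial (Fin (k+2)) S' :=
      Fin.cons (X 0 + X 1) (fun i : Fin k => X i.succ.succ) with hφ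
    set M : MvPolynomial (Fin (k+2)) S' := ∏ i : Fin k, X i.succ.succ ^ e i.succ with hM
    set F : ℕ → (Fin (k+2) →₀ ℕ) := fun j =>
      Finsupp.equivFunOnFinite.symm (Fin.cons j (Fin.cons (e 0 - j) (fun i => e i.succ))) with hF
    have hmono : ∀ j : ℕ, C c * (X 0 ^ j * X 1 ^ (e 0 - j) * ((e 0).choose j : MvPolynomial (Fin (k+2)) S') * M)
        = monomial (F j) (c * (e 0).choose j) := by
      intro j
      have hc1 : (Fin.cons j (Fin.cons (e 0 - j) fun i => e i.succ) : Fin (k+2) → ℕ) 1 = e 0 - j := by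
        rw [show (1 : Fin (k+2)) = (0 : Fin (k+1)).succ from rfl, Fin.cons_succ, Fin.cons_zero]
      rw [monomial_eq, Finsupp.prod_fintype _ _ (fun i => pow_zero _), Fin.prod_univ_succ,
        Fin.prod_univ_succ]
      simp only [hF, Finsupp.coe_equivFunOnFinite_symm, Fin.cons_zero, Fin.cons_succ, hM,
        map_mul, map_natCast, Fin.succ_zero_eq_one, hc1]
      ring
    have hexp : (aeval φ) (monomial e c) = ∑ j ∈ range (e 0 + 1), monomial (F j) (c * (e 0).choose j) := by
      rw [aeval_monomial, Finsupp.prod_fintype _ _ (fun i => pow_zero _), Fin.prod_univ_succ]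
      simp only [hφ, Fin.cons_zero, Fin.cons_succ, algebraMap_eq]
      rw [← hM, add_pow, Finset.sum_mul, Finset.mul_sum]
      exact Finset.sum_congr rfl fun j _ => hmono j
    rw [hexp, coeff_sum]
    simp only [coeff_monomial]
    by_cases he : e = E
    · have he0 : e 0 = α₁ + α₂ := by rw [he, hE]; simp
      have hes : ∀ i : Fin k, e i.succ = β i := by
        intro i; rw [he, hE]; simp
      have hFD : ∀ j, F j = D ↔ j = α₁ := by
        intro j
        constructor
        · intro h
          have := DFunLike.congr_fun h (0 : Fin (k+2))
          simpa [hF, hD] using this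
        · rintro rfl
          ext x
          refine Fin.cases ?_ (fun x => Fin.cases ?_ (fun x => ?_) x) x
          · simp [hF, hD]
          · simp [hF, hD, he0]
          · simp [hF, hD, hes]
      have h1 : (∑ j ∈ range (e 0 + 1), if F j = D then c * ((e 0).choose j : S') else 0)
          = ∑ j ∈ range (e 0 + 1), if j = α₁ then c * ((e 0).choose j : S') else 0 :=
        Finset.sum_congr rfl fun j _ => by simp only [hFD]
      rw [h1, Finset.sum_ite_eq' (range (e 0 + 1)) α₁ (fun j => c * ((e 0).choose j : S'))]
      have hmem : α₁ ∈ range (e 0 + 1) := by simp only [Finset.mem_range]; omega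
      rw [if_pos hmem, if_pos he, he0]
      ring
    · rw [if_neg he, mul_zero]
      refine Finset.sum_eq_zero fun j hj => if_neg fun hFD => he ?_
      have h0 : j = α₁ := by
        have := DFunLike.congr_fun hFD (0 : Fin (k+2)); simpa [hF, hD] using this
      have h1 : e 0 - j = α₂ := by
        have := DFunLike.congr_fun hFD ((0 : Fin (k+1)).succ)
        simpa [hF, hD] using this
      have hs : ∀ i : Fin k, e i.succ = β i := by
        intro i
        have := DFunLike.congr_fun hFD i.succ.succ
        simpa [hF, hD] using this
      have hje : j ≤ e 0 := by simp only [Finset.mem_range] at hj; omega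
      have he0 : e 0 = α₁ + α₂ := by omega
      rw [hE]
      ext x
      refine Fin.cases ?_ (fun x => ?_) x
      · simp [he0]
      · simp [hs]
end KeyAux

/-- if the first two entries coincide then
e_{(α₁,α₂,α₃,…,α_k)}(f,f,f₃,…,f_k) = ((α₁+α₂)!/(α₁!α₂!)) · e_{(α₁+α₂,α₃,…,α_k)}(f,f₃,…,f_k). -/
theorem stmt6 (R : Type*) [CommRing R] (m n k : ℕ)
    (f : MvPolynomial (Fin m) R) (fs : Fin k → MvPolynomial (Fin m) R)
    (α₁ α₂ : ℕ) (β : Fin k → ℕ) (hα : α₁ + α₂ + ∑ i, β i ≤ n) :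
    eAlpha m n (Fin.cons f (Fin.cons f fs)) (Fin.cons α₁ (Fin.cons α₂ β)) =
      Nat.choose (α₁ + α₂) α₁ • eAlpha m n (Fin.cons f fs) (Fin.cons (α₁ + α₂) β) := by
  have hprod :
      (∏ j : Fin n, (1 + ∑ h : Fin (k+2),
          X h * C (subst m n ((Fin.cons f (Fin.cons f fs) : Fin (k+2) → MvPolynomial (Fin m) R) h) j))) =
      aeval (R := MvPolynomial (Fin m × Fin n) R) (Fin.cons (X 0 + X 1) (fun i : Fin k => X i.succ.succ) :
            Fin (k+1) → MvPolynomial (Fin (k+2)) (MvPolynomial (Fin m × Fin n) R))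
        (∏ j : Fin n, (1 + ∑ h : Fin (k+1), X h * C (subst m n ((Fin.cons f fs : Fin (k+1) → MvPolynomial (Fin m) R) h) j))) := by
    rw [map_prod]
    refine Finset.prod_congr rfl fun j _ => ?_
    rw [map_add, map_sum, map_one]
    congr 1
    have hc1 : (Fin.cons f (Fin.cons f fs) : Fin (k+2) → MvPolynomial (Fin m) R) 1 = f := by
      rw [show (1 : Fin (k+2)) = (0 : Fin (k+1)).succ from rfl, Fin.cons_succ, Fin.cons_zero]
    rw [Fin.sum_univ_succ, Fin.sum_univ_succ, Fin.sum_univ_succ]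
    simp only [Fin.cons_zero, Fin.cons_succ, map_mul, aeval_X, aeval_C, algebraMap_eq,
      Fin.succ_zero_eq_one, hc1]
    ring
  simp only [eAlpha]
  rw [hprod, key_lemma, nsmul_eq_mul]

end
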